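/- Let n ≥ 2, m ∈ {1,…,n}, 0 < H₀ ≤ H₁, and ε ∈ (0, 1/n]. Let φ(k) = H_m(k)^{1/m} on the open positive cone Γ₊, let 𝒞 = {k ∈ ℝ^n : H₀ ≤ H(k) ≤ H₁ and k_i ≥ ε·H(k) for all i}, and define φ̃(k) = min_{h ∈ 𝒞} Σ_i ∂φ/∂k_i(h)·k_i. Set m₁ = min{ ∂φ/∂k_i(h) : 1 ≤ i ≤ n, h ∈ 𝒞 } and m₂ = max{ ∂φ/∂k_i(h) : 1 ≤ i ≤ n, h ∈ 𝒞 }. Then m₁ > 0, and for every k ∈ ℝ^n and every l ∈ ℝ^n with l_i ≥ 0 for all i, one has m₁·|l| ≤ φ̃(k + l) − φ̃(k) ≤ √n·m₂·|l|, where |l| is the Euclidean norm. -/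

import Mathlib

open Finset


/-- The normalized `m`-th elementary symmetric polynomial (the `m`-th mean curvature). -/
noncomputable def Hm (n m : ℕ) (k : Fin n → ℝ) : ℝ :=
  ((Nat.factorial m * Nat.factorial (n - m) : ℕ) : ℝ) / (Nat.factorial n : ℝ) *
    ∑ s ∈ Finset.powersetCard m Finset.univ, ∏ i ∈ s, k i

/-- `φ = H_m^(1/m)`. -/
noncomputable def phi (n m : ℕ) (k : Fin n → ℝ) : ℝ := Hm n m k ^ ((1 : ℝ) / m)

/-- The partial derivative `∂φ/∂k_i` at `h`. -/
noncomputable def phid (n m : ℕ) (h : Fin n → ℝ) (i : Fin n) : ℝ :=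
  fderiv ℝ (phi n m) h (Pi.single i 1)

/-- The compact pinched cone slab `𝒞 = {k : H₀ ≤ H(k) ≤ H₁, k_i ≥ ε·H(k) ∀ i}`. -/
def cone (n : ℕ) (ε H₀ H₁ : ℝ) : Set (Fin n → ℝ) :=
  {k | H₀ ≤ ∑ i, k i ∧ (∑ i, k i) ≤ H₁ ∧ ∀ i, ε * (∑ j, k j) ≤ k i}

/-- The Bellman-type extension `φ̃(k) = min_{h ∈ 𝒞} Σ_i ∂φ/∂k_i(h)·k_i`. -/
noncomputable def phiTilde (n m : ℕ) (ε H₀ H₁ : ℝ) (k : Fin n → ℝ) : ℝ :=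
  sInf ((fun h => ∑ i, phid n m h i * k i) '' cone n ε H₀ H₁)

/-- `m₁ = min { ∂φ/∂k_i(h) : 1 ≤ i ≤ n, h ∈ 𝒞 }`. -/
noncomputable def mOne (n m : ℕ) (ε H₀ H₁ : ℝ) : ℝ :=
  sInf {x : ℝ | ∃ i : Fin n, ∃ h ∈ cone n ε H₀ H₁, x = phid n m h i}

/-- `m₂ = max { ∂φ/∂k_i(h) : 1 ≤ i ≤ n, h ∈ 𝒞 }`. -/
noncomputable def mTwo (n m : ℕ) (ε H₀ H₁ : ℝ) : ℝ :=
  sSup {x : ℝ | ∃ i : Fin n, ∃ h ∈ cone n ε H₀ H₁, x = phid n m h i}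

noncomputable def cHm (n m : ℕ) : ℝ :=
  ((Nat.factorial m * Nat.factorial (n - m) : ℕ) : ℝ) / (Nat.factorial n : ℝ)

lemma cHm_pos (n m : ℕ) : 0 < cHm n m := by
  unfold cHm
  have h1 := Nat.factorial_pos m
  have h2 := Nat.factorial_pos (n - m)
  have h3 := Nat.factorial_pos n
  positivity

lemma hasFDerivAt_Hm (n m : ℕ) (h : Fin n → ℝ) :
    HasFDerivAt (Hm n m)
      (cHm n m • ∑ s ∈ Finset.powersetCard m (Finset.univ : Finset (Fin n)),
        ∑ a ∈ s, (∏ j ∈ s.erase a, h j) • (ContinuousLinearMap.proj a : (Fin n → ℝ) →L[ℝ] ℝ)) h := by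
  have hE : HasFDerivAt (fun k : Fin n → ℝ => ∑ s ∈ Finset.powersetCard m Finset.univ, ∏ i ∈ s, k i)
      (∑ s ∈ Finset.powersetCard m (Finset.univ : Finset (Fin n)),
        ∑ a ∈ s, (∏ j ∈ s.erase a, h j) • (ContinuousLinearMap.proj a : (Fin n → ℝ) →L[ℝ] ℝ)) h :=
    HasFDerivAt.fun_sum fun s _ =>
      HasFDerivAt.finset_prod fun a _ => hasFDerivAt_apply a h
  exact hE.const_mul (cHm n m)


noncomputable def gfun (n m : ℕ) (h : Fin n → ℝ) (i : Fin n) : ℝ :=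
  ((1:ℝ)/m) * Hm n m h ^ ((1:ℝ)/m - 1) *
    (cHm n m * ∑ s ∈ Finset.powersetCard m (Finset.univ : Finset (Fin n)),
      if i ∈ s then ∏ j ∈ s.erase i, h j else 0)

lemma phid_eq (n m : ℕ) (h : Fin n → ℝ) (hh : Hm n m h ≠ 0) (i : Fin n) :
    phid n m h i = gfun n m h i := by
  have hphi : HasFDerivAt (phi n m)
      ((((1:ℝ)/m * Hm n m h ^ ((1:ℝ)/m - 1))) •
        (cHm n m • ∑ s ∈ Finset.powersetCard m (Finset.univ : Finset (Fin n)),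
          ∑ a ∈ s, (∏ j ∈ s.erase a, h j) • (ContinuousLinearMap.proj a : (Fin n → ℝ) →L[ℝ] ℝ))) h :=
    (Real.hasDerivAt_rpow_const (Or.inl hh)).comp_hasFDerivAt h (hasFDerivAt_Hm n m h)
  rw [phid, hphi.fderiv]
  simp only [ContinuousLinearMap.coe_smul', Pi.smul_apply, ContinuousLinearMap.coe_sum',
    Finset.sum_apply, ContinuousLinearMap.proj_apply, smul_eq_mul, Pi.single_apply, mul_ite,
    mul_one, mul_zero, Finset.sum_ite_eq', gfun]

lemma continuous_Hm (n m : ℕ) : Continuous (Hm n m) :=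
  continuous_const.mul (continuous_finset_sum _ fun s _ =>
    continuous_finset_prod _ fun i _ => continuous_apply i)

lemma continuousOn_gfun (n m : ℕ) (i : Fin n) :
    ContinuousOn (fun h => gfun n m h i) {h | Hm n m h ≠ 0} := by
  apply ContinuousOn.mul
  · exact continuousOn_const.mul
      (((continuous_Hm n m).continuousOn).rpow_const fun x hx => Or.inl hx)
  · refine Continuous.continuousOn ?_
    refine continuous_const.mul (continuous_finset_sum _ fun s _ => ?_)
    by_cases hs : i ∈ s
    · simpa only [hs, if_true] using continuous_finset_prod (s.erase i) fun j _ => continuous_apply j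
    · simpa only [hs, if_false] using (continuous_const : Continuous fun _ : Fin n → ℝ => (0:ℝ))

lemma Hm_pos (n m : ℕ) (hmn : m ≤ n) {h : Fin n → ℝ} (hp : ∀ j, 0 < h j) : 0 < Hm n m h := by
  have : (0:ℝ) < cHm n m := cHm_pos n m
  refine mul_pos this (Finset.sum_pos (fun s _ => Finset.prod_pos fun j _ => hp j) ?_)
  exact Finset.powersetCard_nonempty.mpr (by simpa using hmn)

lemma gfun_pos (n m : ℕ) (hm1 : 1 ≤ m) (hmn : m ≤ n) {h : Fin n → ℝ}
    (hp : ∀ j, 0 < h j) (i : Fin n) : 0 < gfun n m h i := by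
  have hH := Hm_pos n m hmn hp
  have hm0 : (0:ℝ) < (m:ℝ) := by exact_mod_cast hm1
  refine mul_pos (mul_pos (by positivity) (Real.rpow_pos_of_pos hH _)) ?_
  refine mul_pos (cHm_pos n m) ?_
  obtain ⟨t, hts, htc⟩ := Finset.exists_subset_card_eq
    (s := (Finset.univ : Finset (Fin n)).erase i) (n := m - 1)
    (by simp [Finset.card_erase_of_mem]; omega)
  have hit : i ∉ t := fun hmem => (Finset.mem_erase.mp (hts hmem)).1 rfl
  refine Finset.sum_pos' (fun s _ => ?_) ⟨insert i t, ?_, ?_⟩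
  · split_ifs
    · exact le_of_lt (Finset.prod_pos fun j _ => hp j)
    · exact le_rfl
  · rw [Finset.mem_powersetCard_univ, Finset.card_insert_of_notMem hit, htc]
    omega
  · rw [if_pos (Finset.mem_insert_self i t), Finset.erase_insert hit]
    exact Finset.prod_pos fun j _ => hp j


lemma cone_coord_pos {n : ℕ} {ε H₀ H₁ : ℝ} (hH0 : 0 < H₀) (hε1 : 0 < ε)
    {h : Fin n → ℝ} (hc : h ∈ cone n ε H₀ H₁) : ∀ j, 0 < h j := fun j =>
  lt_of_lt_of_le (mul_pos hε1 (lt_of_lt_of_le hH0 hc.1)) (hc.2.2 j)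

lemma isClosed_cone (n : ℕ) (ε H₀ H₁ : ℝ) : IsClosed (cone n ε H₀ H₁) := by
  have hs : Continuous fun k : Fin n → ℝ => ∑ i, k i :=
    continuous_finset_sum _ fun i _ => continuous_apply i
  have h1 : IsClosed {k : Fin n → ℝ | H₀ ≤ ∑ i, k i} := isClosed_le continuous_const hs
  have h2 : IsClosed {k : Fin n → ℝ | (∑ i, k i) ≤ H₁} := isClosed_le hs continuous_const
  have h3 : IsClosed {k : Fin n → ℝ | ∀ i, ε * (∑ j, k j) ≤ k i} := by
    have : {k : Fin n → ℝ | ∀ i, ε * (∑ j, k j) ≤ k i} =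
        ⋂ i, {k : Fin n → ℝ | ε * (∑ j, k j) ≤ k i} := by ext; simp
    rw [this]
    exact isClosed_iInter fun i => isClosed_le (continuous_const.mul hs) (continuous_apply i)
  exact h1.inter (h2.inter h3)

lemma isCompact_cone (n : ℕ) {ε H₀ H₁ : ℝ} (hH0 : 0 < H₀) (hε1 : 0 < ε) :
    IsCompact (cone n ε H₀ H₁) := by
  refine IsCompact.of_isClosed_subset
    (isCompact_Icc (a := fun _ : Fin n => (0:ℝ)) (b := fun _ => H₁))
    (isClosed_cone n ε H₀ H₁) ?_
  intro k hk
  have hp := cone_coord_pos hH0 hε1 hk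
  constructor
  · intro i; exact (hp i).le
  · intro i
    calc k i ≤ ∑ j, k j := Finset.single_le_sum (fun j _ => (hp j).le) (Finset.mem_univ i)
    _ ≤ H₁ := hk.2.1

lemma cone_nonempty (n : ℕ) {ε H₀ H₁ : ℝ} (hn : 2 ≤ n) (hH0 : 0 < H₀) (hH01 : H₀ ≤ H₁)
    (hε2 : ε ≤ 1 / n) : (cone n ε H₀ H₁).Nonempty := by
  have hn0 : (0:ℝ) < (n:ℝ) := by exact_mod_cast (by omega : 0 < n)
  refine ⟨fun _ => H₀ / n, ?_, ?_, ?_⟩ <;>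
    simp only [Finset.sum_const, Finset.card_univ, Fintype.card_fin, nsmul_eq_mul]
  · rw [mul_div_cancel₀ _ hn0.ne']
  · rw [mul_div_cancel₀ _ hn0.ne']; exact hH01
  · intro i
    rw [mul_div_cancel₀ _ hn0.ne']
    calc ε * H₀ ≤ (1 / n) * H₀ := mul_le_mul_of_nonneg_right hε2 hH0.le
    _ = H₀ / n := by ring


/-- Uniform ellipticity of the Bellman extension: `m₁ > 0` and for all `k` and all
`l ≥ 0` (componentwise), `m₁·|l| ≤ φ̃(k+l) − φ̃(k) ≤ √n·m₂·|l|`, with `|l|` the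
Euclidean norm. -/
theorem stmt11 (n m : ℕ) (hn : 2 ≤ n) (hm1 : 1 ≤ m) (hmn : m ≤ n)
    (H₀ H₁ ε : ℝ) (hH0 : 0 < H₀) (hH01 : H₀ ≤ H₁) (hε1 : 0 < ε) (hε2 : ε ≤ 1 / n) :
    0 < mOne n m ε H₀ H₁ ∧
    ∀ k l : Fin n → ℝ, (∀ i, 0 ≤ l i) →
      mOne n m ε H₀ H₁ * Real.sqrt (∑ i, (l i) ^ 2) ≤
          phiTilde n m ε H₀ H₁ (k + l) - phiTilde n m ε H₀ H₁ k ∧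
      phiTilde n m ε H₀ H₁ (k + l) - phiTilde n m ε H₀ H₁ k ≤
          Real.sqrt n * mTwo n m ε H₀ H₁ * Real.sqrt (∑ i, (l i) ^ 2) := by
  haveI : NeZero n := ⟨by omega⟩
  set C := cone n ε H₀ H₁ with hC
  have hCc : IsCompact C := isCompact_cone n hH0 hε1
  have hCne : C.Nonempty := cone_nonempty n hn hH0 hH01 hε2
  have hpos : ∀ h ∈ C, ∀ j, 0 < h j := fun h hh => cone_coord_pos hH0 hε1 hh
  have hHmne : ∀ h ∈ C, Hm n m h ≠ 0 := fun h hh => (Hm_pos n m hmn (hpos h hh)).ne'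
  have hpg : ∀ h ∈ C, ∀ i, phid n m h i = gfun n m h i :=
    fun h hh i => phid_eq n m h (hHmne h hh) i
  have hsub : C ⊆ {h | Hm n m h ≠ 0} := fun h hh => hHmne h hh
  have hcg : ∀ i : Fin n, ContinuousOn (fun h => gfun n m h i) C :=
    fun i => (continuousOn_gfun n m i).mono hsub
  -- pointwise positivity of phid on C
  have hgp : ∀ h ∈ C, ∀ i, 0 < phid n m h i := fun h hh i => by
    rw [hpg h hh i]; exact gfun_pos n m hm1 hmn (hpos h hh) i
  -- min and max of phid over C, per coordinate
  have hmin : ∀ i : Fin n, ∃ δ : ℝ, 0 < δ ∧ ∀ h ∈ C, δ ≤ phid n m h i := by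
    intro i
    obtain ⟨h₀, h₀C, hm0⟩ := hCc.exists_isMinOn hCne (hcg i)
    exact ⟨gfun n m h₀ i, gfun_pos n m hm1 hmn (hpos h₀ h₀C) i,
      fun h hh => by rw [hpg h hh i]; exact hm0 hh⟩
  have hmax : ∀ i : Fin n, ∃ M : ℝ, ∀ h ∈ C, phid n m h i ≤ M := by
    intro i
    obtain ⟨h₀, h₀C, hm0⟩ := hCc.exists_isMaxOn hCne (hcg i)
    exact ⟨gfun n m h₀ i, fun h hh => by rw [hpg h hh i]; exact hm0 hh⟩
  choose δ hδpos hδle using hmin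
  choose M hMge using hmax
  set S := {x : ℝ | ∃ i : Fin n, ∃ h ∈ cone n ε H₀ H₁, x = phid n m h i} with hS
  have hSne : S.Nonempty := by
    obtain ⟨h₀, h₀C⟩ := hCne
    exact ⟨phid n m h₀ 0, 0, h₀, h₀C, rfl⟩
  have hδ0 : 0 < Finset.univ.inf' Finset.univ_nonempty δ := by
    rw [Finset.lt_inf'_iff]; exact fun i _ => hδpos i
  have hSlb : ∀ x ∈ S, Finset.univ.inf' Finset.univ_nonempty δ ≤ x := by
    rintro x ⟨i, h, hh, rfl⟩
    exact le_trans (Finset.inf'_le δ (Finset.mem_univ i)) (hδle i h hh)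
  have hSbb : BddBelow S := ⟨_, hSlb⟩
  have hSub : ∀ x ∈ S, x ≤ Finset.univ.sup' Finset.univ_nonempty M := by
    rintro x ⟨i, h, hh, rfl⟩
    exact le_trans (hMge i h hh) (Finset.le_sup' M (Finset.mem_univ i))
  have hSba : BddAbove S := ⟨_, hSub⟩
  have hm1pos : 0 < mOne n m ε H₀ H₁ := lt_of_lt_of_le hδ0 (le_csInf hSne hSlb)
  have hm1le : ∀ i : Fin n, ∀ h ∈ C, mOne n m ε H₀ H₁ ≤ phid n m h i :=
    fun i h hh => csInf_le hSbb ⟨i, h, hh, rfl⟩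
  have hm2ge : ∀ i : Fin n, ∀ h ∈ C, phid n m h i ≤ mTwo n m ε H₀ H₁ :=
    fun i h hh => le_csSup hSba ⟨i, h, hh, rfl⟩
  have hm2pos : 0 < mTwo n m ε H₀ H₁ := by
    obtain ⟨h₀, h₀C⟩ := hCne
    exact lt_of_lt_of_le (hgp h₀ h₀C 0) (hm2ge 0 h₀ h₀C)
  -- attainment of phiTilde
  have hattain : ∀ k : Fin n → ℝ, ∃ h₀ ∈ C,
      phiTilde n m ε H₀ H₁ k = ∑ i, phid n m h₀ i * k i ∧
      ∀ h' ∈ C, ∑ i, phid n m h₀ i * k i ≤ ∑ i, phid n m h' i * k i := by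
    intro k
    have hcont : ContinuousOn (fun h => ∑ i, phid n m h i * k i) C := by
      have hg2 : ContinuousOn (fun h => ∑ i, gfun n m h i * k i) C :=
        continuousOn_finset_sum _ fun i _ => (hcg i).mul continuousOn_const
      exact hg2.congr fun h hh => Finset.sum_congr rfl fun i _ => by rw [hpg h hh i]
    obtain ⟨h₀, h₀C, hm0⟩ := hCc.exists_isMinOn hCne hcont
    refine ⟨h₀, h₀C, ?_, fun h' hh' => hm0 hh'⟩
    refine (IsLeast.csInf_eq ⟨⟨h₀, h₀C, rfl⟩, ?_⟩)
    rintro x ⟨h', hh', rfl⟩; exact hm0 hh'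
  refine ⟨hm1pos, fun k l hl => ?_⟩
  obtain ⟨h₁, h₁C, he1, hmin1⟩ := hattain (k + l)
  obtain ⟨h₀, h₀C, he0, hmin0⟩ := hattain k
  have hsums : ∀ h : Fin n → ℝ, ∑ i, phid n m h i * (k + l) i =
      ∑ i, phid n m h i * k i + ∑ i, phid n m h i * l i := by
    intro h; rw [← Finset.sum_add_distrib]
    exact Finset.sum_congr rfl fun i _ => by simp [mul_add]
  have hsq : Real.sqrt (∑ i, (l i) ^ 2) ≤ ∑ i, l i := by
    rw [show ∑ i, l i = Real.sqrt ((∑ i, l i) ^ 2) from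
      (Real.sqrt_sq (Finset.sum_nonneg fun i _ => hl i)).symm]
    exact Real.sqrt_le_sqrt (Finset.sum_sq_le_sq_sum_of_nonneg fun i _ => hl i)
  have hsq2 : ∑ i, l i ≤ Real.sqrt n * Real.sqrt (∑ i, (l i) ^ 2) := by
    rw [← Real.sqrt_mul (by positivity : (0:ℝ) ≤ (n:ℝ))]
    rw [show ∑ i, l i = Real.sqrt ((∑ i, l i) ^ 2) from
      (Real.sqrt_sq (Finset.sum_nonneg fun i _ => hl i)).symm]
    refine Real.sqrt_le_sqrt ?_
    have := sq_sum_le_card_mul_sum_sq (s := (Finset.univ : Finset (Fin n))) (f := l)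
    simpa using this
  constructor
  · -- lower bound
    have A : phiTilde n m ε H₀ H₁ k ≤ ∑ i, phid n m h₁ i * k i := he0 ▸ hmin0 h₁ h₁C
    have B : mOne n m ε H₀ H₁ * ∑ i, l i ≤ ∑ i, phid n m h₁ i * l i := by
      rw [Finset.mul_sum]
      exact Finset.sum_le_sum fun i _ =>
        mul_le_mul_of_nonneg_right (hm1le i h₁ h₁C) (hl i)
    have D : mOne n m ε H₀ H₁ * Real.sqrt (∑ i, (l i) ^ 2) ≤ mOne n m ε H₀ H₁ * ∑ i, l i :=
      mul_le_mul_of_nonneg_left hsq hm1pos.le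
    linarith [A, B, D, he1, hsums h₁]
  · -- upper bound
    have A : phiTilde n m ε H₀ H₁ (k + l) ≤ ∑ i, phid n m h₀ i * (k + l) i :=
      he1 ▸ hmin1 h₀ h₀C
    have B : ∑ i, phid n m h₀ i * l i ≤ mTwo n m ε H₀ H₁ * ∑ i, l i := by
      rw [Finset.mul_sum]
      exact Finset.sum_le_sum fun i _ =>
        mul_le_mul_of_nonneg_right (hm2ge i h₀ h₀C) (hl i)
    have D : mTwo n m ε H₀ H₁ * ∑ i, l i ≤
        mTwo n m ε H₀ H₁ * (Real.sqrt n * Real.sqrt (∑ i, (l i) ^ 2)) :=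
      mul_le_mul_of_nonneg_left hsq2 hm2pos.le
    have F : mTwo n m ε H₀ H₁ * (Real.sqrt n * Real.sqrt (∑ i, (l i) ^ 2)) =
        Real.sqrt n * mTwo n m ε H₀ H₁ * Real.sqrt (∑ i, (l i) ^ 2) := by ring
    linarith [A, B, D, he0, hsums h₀, F]
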